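/- arXiv:1903.11980 — 4 statements merged into one kernel-verified Lean document; each statement's English description precedes it below -/
import Mathlib

section
/- Let X₁, ..., Xₙ be real random variables, each with finite mean and variance. Then E[max_i X_i] ≤ max_i E[X_i] + sqrt( ((n−1)/n) · Σ_{i=1}^n Var(X_i) ). -/
open MeasureTheory ProbabilityTheory
open Finset

lemma aux_alg {n : ℕ} (z : Fin n → ℝ) (hz : ∑ j, z j = 0) (i : Fin n) :
    z i ≤ Real.sqrt (((n : ℝ) - 1) / n * ∑ j, z j ^ 2) := by
  have hn : 0 < n := i.pos
  have hnR : (0:ℝ) < n := by exact_mod_cast hn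
  have h1 : z i = -(∑ j ∈ univ.erase i, z j) := by
    have := Finset.add_sum_erase univ z (mem_univ i)
    linarith [hz, this]
  have h2 : (z i) ^ 2 ≤ ((n:ℝ) - 1) * ∑ j ∈ univ.erase i, z j ^ 2 := by
    have := sq_sum_le_card_mul_sum_sq (s := univ.erase i) (f := z)
    rw [Finset.card_erase_of_mem (mem_univ i), card_univ, Fintype.card_fin] at this
    have hcast : ((n - 1 : ℕ) : ℝ) = (n:ℝ) - 1 := by
      have : 1 ≤ n := hn
      push_cast [this]; ring
    rw [h1, neg_pow, ← hcast]
    simpa using this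
  have h3 : ∑ j ∈ univ.erase i, z j ^ 2 = (∑ j, z j ^ 2) - z i ^ 2 := by
    have := Finset.add_sum_erase univ (fun j => z j ^ 2) (mem_univ i)
    linarith
  have h4 : (z i) ^ 2 ≤ ((n:ℝ) - 1) / n * ∑ j, z j ^ 2 := by
    rw [h3] at h2
    rw [div_mul_eq_mul_div, le_div_iff₀ hnR]
    nlinarith
  calc z i ≤ |z i| := le_abs_self _
    _ = Real.sqrt ((z i) ^ 2) := (Real.sqrt_sq_eq_abs _).symm
    _ ≤ _ := Real.sqrt_le_sqrt h4


/-- Aven's bound: for real random variables `X₁, ..., Xₙ`, each with finite mean and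
variance, `E[max_i X_i] ≤ max_i E[X_i] + sqrt(((n−1)/n) · Σ_i Var(X_i))`. -/
theorem expectation_max_le {Ω : Type*} [MeasurableSpace Ω] (P : Measure Ω)
    [IsProbabilityMeasure P] (n : ℕ) (hn : 0 < n)
    (X : Fin n → Ω → ℝ) (hmeas : ∀ i, Measurable (X i))
    (hL2 : ∀ i, MemLp (X i) 2 P) :
    haveI : Nonempty (Fin n) := Fin.pos_iff_nonempty.mp hn
    ∫ ω, (⨆ i, X i ω) ∂P ≤
      (⨆ i, ∫ ω, X i ω ∂P) +
        Real.sqrt ((((n : ℝ) - 1) / n) * ∑ i, variance (X i) P) := by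
  haveI : Nonempty (Fin n) := Fin.pos_iff_nonempty.mp hn
  have hnR : (0:ℝ) < n := by exact_mod_cast hn
  set μ : Fin n → ℝ := fun i => ∫ ω, X i ω ∂P with hμ
  have hInt : ∀ i, Integrable (X i) P := fun i => (hL2 i).integrable one_le_two
  set Y : Fin n → Ω → ℝ := fun i ω => X i ω - μ i with hY
  have hYL2 : ∀ i, MemLp (Y i) 2 P := fun i => (hL2 i).sub (memLp_const _)
  have hYmeas : ∀ i, Measurable (Y i) := fun i => (hmeas i).sub measurable_const
  set B : Ω → ℝ := fun ω => (n:ℝ)⁻¹ * ∑ i, Y i ω with hB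
  have hsumYL2 : MemLp (fun ω => ∑ i, Y i ω) 2 P := by
    have h := memLp_finset_sum' (μ := P) (p := 2) univ (fun i _ => hYL2 i)
    have he : (∑ i : Fin n, Y i) = fun ω => ∑ i, Y i ω := by ext ω; simp
    rwa [he] at h
  have hBL2 : MemLp B 2 P := hsumYL2.const_mul _
  have hBmeas : Measurable B := by
    exact (Finset.measurable_sum univ (fun i _ => hYmeas i)).const_mul _
  set Z : Fin n → Ω → ℝ := fun i ω => Y i ω - B ω with hZ
  have hsumY : ∀ ω, ∑ i, Y i ω = n * B ω := by
    intro ω; rw [hB]; field_simp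
  have hsumZ : ∀ ω, ∑ i, Z i ω = 0 := by
    intro ω
    simp only [hZ, Finset.sum_sub_distrib, Finset.sum_const, card_univ, Fintype.card_fin,
      nsmul_eq_mul, hsumY ω, sub_self]
  set S : Ω → ℝ := fun ω => ∑ i, Z i ω ^ 2 with hS
  have hSmeas : Measurable S :=
    Finset.measurable_sum univ (fun i _ => ((hYmeas i).sub hBmeas).pow_const 2)
  have hSnonneg : ∀ ω, 0 ≤ S ω := fun ω => Finset.sum_nonneg fun i _ => sq_nonneg _
  -- S ≤ ∑ Y²  pointwise
  have hSle : ∀ ω, S ω ≤ ∑ i, Y i ω ^ 2 := by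
    intro ω
    have expand : S ω = ∑ i, (Y i ω ^ 2 - 2 * B ω * Y i ω + B ω ^ 2) :=
      Finset.sum_congr rfl fun i _ => by simp only [hZ]; ring
    rw [expand, Finset.sum_add_distrib, Finset.sum_sub_distrib, ← Finset.mul_sum, hsumY ω,
      Finset.sum_const, card_univ, Fintype.card_fin, nsmul_eq_mul]
    nlinarith [sq_nonneg (B ω), hnR]
  -- integrability
  have hYsqInt : ∀ i, Integrable (fun ω => Y i ω ^ 2) P := fun i => (hYL2 i).integrable_sq
  have hSInt : Integrable S P := by
    have : Integrable (fun ω => ∑ i, Y i ω ^ 2) P := integrable_finset_sum _ fun i _ => hYsqInt i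
    have hZsqInt : ∀ i, Integrable (fun ω => Z i ω ^ 2) P := fun i =>
      ((hYL2 i).sub hBL2).integrable_sq
    exact integrable_finset_sum _ fun i _ => hZsqInt i
  have hsqrtSL2 : MemLp (fun ω => Real.sqrt (S ω)) 2 P := by
    rw [memLp_two_iff_integrable_sq (hSmeas.sqrt.aestronglyMeasurable)]
    have : (fun ω => Real.sqrt (S ω) ^ 2) = S := by
      ext ω; exact Real.sq_sqrt (hSnonneg ω)
    rwa [this]
  have hsqrtSInt : Integrable (fun ω => Real.sqrt (S ω)) P := hsqrtSL2.integrable one_le_two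
  -- ∫ sqrt S ≤ sqrt (∑ Var)
  have hintS : ∫ ω, S ω ∂P ≤ ∑ i, variance (X i) P := by
    have h1 : ∫ ω, S ω ∂P ≤ ∫ ω, ∑ i, Y i ω ^ 2 ∂P :=
      integral_mono hSInt (integrable_finset_sum _ fun i _ => hYsqInt i) hSle
    have h2 : ∫ ω, ∑ i, Y i ω ^ 2 ∂P = ∑ i, variance (X i) P := by
      rw [integral_finset_sum _ fun i _ => hYsqInt i]
      refine Finset.sum_congr rfl fun i _ => ?_
      rw [variance_eq_integral (hmeas i).aemeasurable]
    linarith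
  have hsqrtbound : ∫ ω, Real.sqrt (S ω) ∂P ≤ Real.sqrt (∑ i, variance (X i) P) := by
    have hnn : 0 ≤ ∫ ω, Real.sqrt (S ω) ∂P :=
      integral_nonneg fun ω => Real.sqrt_nonneg _
    have hv := variance_nonneg (fun ω => Real.sqrt (S ω)) P
    rw [variance_eq_sub hsqrtSL2] at hv
    have hsq : (∫ ω, Real.sqrt (S ω) ∂P) ^ 2 ≤ ∫ ω, S ω ∂P := by
      have heq : ∫ ω, ((fun ω => Real.sqrt (S ω)) ^ 2) ω ∂P = ∫ ω, S ω ∂P :=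
        integral_congr_ae (Filter.Eventually.of_forall fun ω => by
          simp [Real.sq_sqrt (hSnonneg ω)])
      linarith [hv, heq]
    calc ∫ ω, Real.sqrt (S ω) ∂P = Real.sqrt ((∫ ω, Real.sqrt (S ω) ∂P) ^ 2) :=
          (Real.sqrt_sq hnn).symm
      _ ≤ Real.sqrt (∫ ω, S ω ∂P) := Real.sqrt_le_sqrt hsq
      _ ≤ _ := Real.sqrt_le_sqrt hintS
  -- pointwise bound on the sup
  set c : ℝ := ((n:ℝ) - 1) / n with hc
  have hc0 : 0 ≤ c := by
    apply div_nonneg _ hnR.le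
    have : (1:ℝ) ≤ n := by exact_mod_cast hn
    linarith
  set g : Ω → ℝ := fun ω => Real.sqrt c * Real.sqrt (S ω) with hg
  have hgInt : Integrable g P := hsqrtSInt.const_mul _
  have hbddμ : BddAbove (Set.range μ) := Set.Finite.bddAbove (Set.finite_range μ)
  have hpt : ∀ ω, (⨆ i, X i ω) ≤ (⨆ i, μ i) + B ω + g ω := by
    intro ω
    refine ciSup_le fun i => ?_
    have h1 : μ i ≤ ⨆ i, μ i := le_ciSup hbddμ i
    have h2 : Z i ω ≤ g ω := by
      have h := aux_alg (fun j => Z j ω) (hsumZ ω) i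
      show Z i ω ≤ Real.sqrt c * Real.sqrt (S ω)
      calc Z i ω ≤ Real.sqrt (c * S ω) := h
        _ = Real.sqrt c * Real.sqrt (S ω) := Real.sqrt_mul hc0 _
    have : X i ω = μ i + B ω + Z i ω := by simp only [hZ, hY]; ring
    linarith
  -- integrability of the sup
  have hne : (univ : Finset (Fin n)).Nonempty := univ_nonempty
  have hFmeas : Measurable (fun ω => ⨆ i, X i ω) := by
    have heq : (fun ω => ⨆ i, X i ω) = univ.sup' hne X := by
      ext ω
      rw [← Finset.sup'_univ_eq_ciSup]
      exact (Finset.sup'_apply hne X ω).symm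
    rw [heq]
    exact Finset.measurable_sup' hne (fun i _ => hmeas i)
  have hFInt : Integrable (fun ω => ⨆ i, X i ω) P := by
    refine Integrable.mono' (g := fun ω => ∑ i, |X i ω|)
      (integrable_finset_sum _ fun i _ => (hInt i).abs) hFmeas.aestronglyMeasurable ?_
    filter_upwards with ω
    rw [Real.norm_eq_abs, abs_le]
    constructor
    · have i0 : Fin n := Classical.arbitrary _
      have h1 : X i0 ω ≤ ⨆ i, X i ω :=
        le_ciSup (f := fun j => X j ω) (Set.Finite.bddAbove (Set.finite_range _)) i0
      have h2 : -|X i0 ω| ≤ X i0 ω := neg_abs_le _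
      have h3 : |X i0 ω| ≤ ∑ i, |X i ω| :=
        Finset.single_le_sum (f := fun i => |X i ω|) (fun i _ => abs_nonneg _) (mem_univ i0)
      linarith
    · exact ciSup_le fun i => le_trans (le_abs_self _)
        (Finset.single_le_sum (f := fun i => |X i ω|) (fun i _ => abs_nonneg _) (mem_univ i))
  -- integrate the pointwise bound
  have hBInt : Integrable B P := hBL2.integrable one_le_two
  have hRHSInt : Integrable (fun ω => (⨆ i, μ i) + B ω + g ω) P :=
    ((integrable_const _).add hBInt).add hgInt
  have hmain : ∫ ω, (⨆ i, X i ω) ∂P ≤ ∫ ω, ((⨆ i, μ i) + B ω + g ω) ∂P :=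
    integral_mono hFInt hRHSInt hpt
  have hYInt : ∀ i, Integrable (Y i) P := fun i => (hYL2 i).integrable one_le_two
  have hYint0 : ∀ i ∈ univ, ∫ ω, Y i ω ∂P = 0 := by
    intro i _
    have h : ∫ ω, Y i ω ∂P = (∫ ω, X i ω ∂P) - ∫ _ω, μ i ∂P := by
      simp only [hY]
      exact integral_sub (hInt i) (integrable_const _)
    rw [h, integral_const]
    simp [hμ]
  have hintB : ∫ ω, B ω ∂P = 0 := by
    rw [hB]
    simp only [integral_const_mul]
    rw [integral_finset_sum _ fun i _ => hYInt i, Finset.sum_congr rfl hYint0]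
    simp
  have hrhs : ∫ ω, ((⨆ i, μ i) + B ω + g ω) ∂P ≤
      (⨆ i, μ i) + Real.sqrt (c * ∑ i, variance (X i) P) := by
    have hconst : Integrable (fun _ : Ω => (⨆ i, μ i)) P := integrable_const _
    have h1 : Integrable (fun ω => (⨆ i, μ i) + B ω) P := hconst.add hBInt
    rw [integral_add h1 hgInt, integral_add hconst hBInt, integral_const, hintB]
    simp only [measure_univ, ENNReal.toReal_one, probReal_univ, one_smul, add_zero]
    have : ∫ ω, g ω ∂P = Real.sqrt c * ∫ ω, Real.sqrt (S ω) ∂P := by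
      rw [hg]; exact integral_const_mul _ _
    rw [this, Real.sqrt_mul hc0]
    have := mul_le_mul_of_nonneg_left hsqrtbound (Real.sqrt_nonneg c)
    linarith
  calc ∫ ω, (⨆ i, X i ω) ∂P ≤ _ := hmain
    _ ≤ _ := hrhs
end

section
/- Let ALG be a random variable distributed as F_κ plus a sum of independent exponentials with rates κ, κ+1, ..., n−1, where F_κ ≤ 2 and 1 ≤ κ < n. Then for every real t, P(ALG ≥ t) ≤ binom(n−1, κ) · e^{−κ(t−2)}. -/
open MeasureTheory ProbabilityTheory Real Set
open MeasureTheory ProbabilityTheory Real Set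

lemma integral_exp_neg_mul_Ioi' {b : ℝ} (hb : 0 < b) (a : ℝ) :
    ∫ x in Ioi a, Real.exp (-(b * x)) = Real.exp (-(b * a)) / b := by
  have h := integral_comp_mul_left_Ioi (fun y => Real.exp (-y)) a hb
  simp only [smul_eq_mul, integral_exp_neg_Ioi] at h
  calc ∫ x in Ioi a, Real.exp (-(b * x)) = b⁻¹ * Real.exp (-(b * a)) := h
    _ = Real.exp (-(b * a)) / b := by ring

lemma lintegral_exp_mul_expMeasure {r c : ℝ} (hc : 0 ≤ c) (hcr : c < r) :
    ∫⁻ x, ENNReal.ofReal (Real.exp (c * x)) ∂(expMeasure r) = ENNReal.ofReal (r / (r - c)) := by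
  have hr : 0 < r := hc.trans_lt hcr
  have hb : 0 < r - c := sub_pos.mpr hcr
  have hpdf : expMeasure r = volume.withDensity (exponentialPDF r) := rfl
  have hm1 : Measurable (exponentialPDF r) := (measurable_exponentialPDFReal r).ennreal_ofReal
  have hm2 : Measurable fun x : ℝ => ENNReal.ofReal (Real.exp (c * x)) :=
    ((measurable_id.const_mul c).exp).ennreal_ofReal
  rw [hpdf, lintegral_withDensity_eq_lintegral_mul _ hm1 hm2]
  have hcongr : ∀ x, (exponentialPDF r * fun x => ENNReal.ofReal (Real.exp (c * x))) x
      = Set.indicator (Ici 0) (fun x => ENNReal.ofReal (r * Real.exp (-((r - c) * x)))) x := by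
    intro x
    rw [Pi.mul_apply, exponentialPDF_eq]
    by_cases hx : 0 ≤ x
    · rw [if_pos hx, Set.indicator_of_mem (show x ∈ Ici 0 from hx), ← ENNReal.ofReal_mul (by positivity)]
      congr 1
      rw [mul_assoc, ← Real.exp_add]
      ring_nf
    · rw [if_neg hx, Set.indicator_of_notMem (show x ∉ Ici 0 from hx)]
      simp
  rw [lintegral_congr hcongr, lintegral_indicator measurableSet_Ici _]
  have hInt : IntegrableOn (fun x => r * Real.exp (-((r - c) * x))) (Ici 0) := by
    rw [integrableOn_Ici_iff_integrableOn_Ioi]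
    have h0 := (exp_neg_integrableOn_Ioi 0 hb).const_mul r
    have : (fun x => r * Real.exp (-((r - c) * x))) = fun x => r * Real.exp (-(r - c) * x) := by
      funext x; ring_nf
    rw [this]
    exact h0
  rw [← ofReal_integral_eq_lintegral_ofReal hInt (ae_of_all _ fun x => by positivity)]
  congr 1
  rw [MeasureTheory.integral_Ici_eq_integral_Ioi, MeasureTheory.integral_const_mul,
    integral_exp_neg_mul_Ioi' hb 0]
  rw [mul_zero, neg_zero, Real.exp_zero]
  ring

lemma expMeasure_tail {r : ℝ} (hr : 0 < r) (u : ℝ) :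
    expMeasure r (Ici u) ≤ ENNReal.ofReal (Real.exp (-(r * u))) := by
  haveI : IsProbabilityMeasure (expMeasure r) := isProbabilityMeasure_expMeasure hr
  rcases le_or_gt u 0 with hu | hu
  · calc expMeasure r (Ici u) ≤ 1 := prob_le_one
      _ ≤ ENNReal.ofReal (Real.exp (-(r * u))) := by
        rw [← ENNReal.ofReal_one]
        exact ENNReal.ofReal_le_ofReal (Real.one_le_exp (by nlinarith))
  · have hpdf : expMeasure r = volume.withDensity (exponentialPDF r) := rfl
    have hIic : expMeasure r (Iic u) = ENNReal.ofReal (1 - Real.exp (-(r * u))) := by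
      rw [hpdf, withDensity_apply _ measurableSet_Iic,
        lintegral_exponentialPDF_eq_antiDeriv hr u, if_pos hu.le]
    have hpt : expMeasure r {u} = 0 := by
      rw [hpdf, withDensity_apply _ (measurableSet_singleton u),
        setLIntegral_measure_zero _ _ (measure_singleton u)]
    have hIio : expMeasure r (Iio u) = ENNReal.ofReal (1 - Real.exp (-(r * u))) := by
      refine le_antisymm (hIic ▸ measure_mono Iio_subset_Iic_self) ?_
      calc ENNReal.ofReal (1 - Real.exp (-(r * u))) = expMeasure r (Iic u) := hIic.symm
        _ ≤ expMeasure r (Iio u) + expMeasure r {u} := by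
            rw [← Iio_union_right]; exact measure_union_le _ _
        _ = expMeasure r (Iio u) := by rw [hpt, add_zero]
    apply le_of_eq
    rw [← Set.compl_Iio, measure_compl measurableSet_Iio (measure_ne_top _ _), measure_univ, hIio]
    have he1 : Real.exp (-(r * u)) ≤ 1 := Real.exp_le_one_iff.mpr (by nlinarith)
    rw [← ENNReal.ofReal_one, ← ENNReal.ofReal_sub _ (by linarith)]
    congr 1; ring
open MeasureTheory ProbabilityTheory Real Set

lemma prod_ratio_choose (κ : ℕ) : ∀ n, κ + 1 ≤ n →
    ∏ i ∈ Finset.Ico (κ + 1) n, ((i : ℝ) / ((i : ℝ) - (κ : ℝ))) = ((n - 1).choose κ : ℝ) := by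
  intro n hn
  induction n, hn using Nat.le_induction with
  | base => simp
  | succ m hm ih =>
    rw [Finset.prod_Ico_succ_top hm, ih]
    have hmκ : κ < m := hm
    have hnat : (m - 1).choose κ * m = m.choose κ * (m - κ) := by
      have h := Nat.choose_mul_succ_eq (m - 1) κ
      rwa [Nat.sub_add_cancel (by omega)] at h
    have hcast : ((m - 1).choose κ : ℝ) * m = (m.choose κ : ℝ) * ((m : ℝ) - κ) := by
      have := congrArg (fun x : ℕ => (x : ℝ)) hnat
      push_cast [Nat.cast_sub hmκ.le] at this
      convert this using 2
    have hpos : (0 : ℝ) < (m : ℝ) - κ := by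
      have : (κ : ℝ) < m := by exact_mod_cast hmκ
      linarith
    have : ((m + 1 - 1).choose κ : ℝ) = (m.choose κ : ℝ) := by norm_num
    rw [this]
    field_simp
    linarith [hcast]

@[to_additive]
lemma prod_erase_subtype {κ n : ℕ} (hmem : κ ∈ Finset.Ico κ n) {M : Type*} [CommMonoid M]
    (f : ℕ → M) :
    ∏ j ∈ Finset.univ.erase (⟨κ, hmem⟩ : {i : ℕ // i ∈ Finset.Ico κ n}), f j.1
      = ∏ i ∈ Finset.Ico (κ + 1) n, f i := by
  refine Finset.prod_bij (fun j _ => j.1) ?_ ?_ ?_ ?_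
  · rintro ⟨a, ha⟩ haa
    simp only [Finset.mem_erase, Finset.mem_univ, and_true, ne_eq, Subtype.mk.injEq] at haa
    simp only [Finset.mem_Ico] at ha ⊢
    omega
  · rintro ⟨a, _⟩ _ ⟨b, _⟩ _ h
    exact Subtype.ext h
  · intro b hb
    simp only [Finset.mem_Ico] at hb
    refine ⟨⟨b, by simp only [Finset.mem_Ico]; omega⟩, ?_, rfl⟩
    simp only [Finset.mem_erase, Finset.mem_univ, and_true, ne_eq, Subtype.mk.injEq]
    omega
  · intros; rfl

/-- Tail bound for `ALG = F_κ + Σ_{i=κ}^{n−1} Exp(i)` with `F_κ ≤ 2` and `1 ≤ κ < n`: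
for every real `t`, `P(ALG ≥ t) ≤ binom(n−1, κ) · e^{−κ(t−2)}`. -/
theorem alg_tail_bound {Ω : Type*} [MeasurableSpace Ω] (P : Measure Ω)
    [IsProbabilityMeasure P] (n κ : ℕ) (hκ : 1 ≤ κ) (hκn : κ < n)
    (F : ℝ) (hF : F ≤ 2)
    (X : ℕ → Ω → ℝ) (hmeas : ∀ i, Measurable (X i))
    (hindep : iIndepFun
      (fun i : {i : ℕ // i ∈ Finset.Ico κ n} => X i) P)
    (hlaw : ∀ i ∈ Finset.Ico κ n, P.map (X i) = expMeasure i) :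
    ∀ t : ℝ, (P {ω | F + ∑ i ∈ Finset.Ico κ n, X i ω ≥ t}).toReal ≤
      ((n - 1).choose κ : ℝ) * Real.exp (-(κ : ℝ) * (t - 2)) := by
  intro t
  have hκpos : (0 : ℝ) < (κ : ℝ) := by exact_mod_cast hκ
  have hmemκ : κ ∈ Finset.Ico κ n := Finset.mem_Ico.mpr ⟨le_rfl, hκn⟩
  set s₀ : ℝ := t - 2 with hs₀
  set T : Ω → ℝ := fun ω => ∑ i ∈ Finset.Ico (κ + 1) n, X i ω with hTdef
  have hT_meas : Measurable T := Finset.measurable_sum _ (fun i _ => hmeas i)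
  set j₀ : {i : ℕ // i ∈ Finset.Ico κ n} := ⟨κ, hmemκ⟩ with hj₀
  set s' : Finset {i : ℕ // i ∈ Finset.Ico κ n} := Finset.univ.erase j₀ with hs'
  have hTT' : (∑ j ∈ s', fun ω => X (j : ℕ) ω) = T := by
    funext ω
    rw [Finset.sum_apply]
    exact sum_erase_subtype hmemκ (fun i => X i ω)
  have hIndep : IndepFun T (X κ) P := by
    have h := hindep.indepFun_finsetSum_of_notMem (fun i => hmeas i)
      (Finset.notMem_erase j₀ Finset.univ)
    rwa [hTT'] at h
  have hmE : Measurable fun x : ℝ => ENNReal.ofReal (Real.exp ((κ : ℝ) * x)) :=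
    ((measurable_id.const_mul _).exp).ennreal_ofReal
  have per_lint : ∀ i ∈ Finset.Ico (κ + 1) n,
      ∫⁻ ω, ENNReal.ofReal (Real.exp ((κ : ℝ) * X i ω)) ∂P
        = ENNReal.ofReal ((i : ℝ) / ((i : ℝ) - (κ : ℝ))) := by
    intro i hi
    rw [Finset.mem_Ico] at hi
    have hκi : (κ : ℝ) < (i : ℝ) := by exact_mod_cast (by omega : κ < i)
    have hilaw : P.map (X i) = expMeasure i := hlaw i (Finset.mem_Ico.mpr ⟨by omega, hi.2⟩)
    rw [← lintegral_map hmE (hmeas i), hilaw, lintegral_exp_mul_expMeasure hκpos.le hκi]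
  have per_int : ∀ i ∈ Finset.Ico (κ + 1) n,
      Integrable (fun ω => Real.exp ((κ : ℝ) * X i ω)) P := by
    intro i hi
    refine ⟨(((hmeas i).const_mul _).exp).aestronglyMeasurable, ?_⟩
    rw [hasFiniteIntegral_iff_ofReal (ae_of_all _ fun ω => (Real.exp_pos _).le), per_lint i hi]
    exact ENNReal.ofReal_lt_top
  have per_mgf : ∀ i ∈ Finset.Ico (κ + 1) n,
      mgf (X i) P (κ : ℝ) = (i : ℝ) / ((i : ℝ) - (κ : ℝ)) := by
    intro i hi
    have hκi : (κ : ℝ) < (i : ℝ) := by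
      rw [Finset.mem_Ico] at hi
      exact_mod_cast (by omega : κ < i)
    have hnn : 0 ≤ (i : ℝ) / ((i : ℝ) - (κ : ℝ)) := by
      apply div_nonneg (by positivity); linarith
    rw [mgf, integral_eq_lintegral_of_nonneg_ae (ae_of_all _ fun ω => (Real.exp_pos _).le)
      ((((hmeas i).const_mul _).exp).aestronglyMeasurable), per_lint i hi,
      ENNReal.toReal_ofReal hnn]
  have hmem' : ∀ j : {i : ℕ // i ∈ Finset.Ico κ n}, j ∈ s' → (j : ℕ) ∈ Finset.Ico (κ + 1) n := by
    rintro ⟨a, ha⟩ hj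
    simp only [hs', hj₀, Finset.mem_erase, Finset.mem_univ, and_true, ne_eq,
      Subtype.mk.injEq] at hj
    simp only [Finset.mem_Ico] at ha ⊢
    omega
  have hInt_T : Integrable (fun ω => Real.exp ((κ : ℝ) * T ω)) P := by
    have h := hindep.integrable_exp_mul_sum (fun i => hmeas i)
      (s := s') (fun j hj => per_int j.1 (hmem' j hj))
    rwa [hTT'] at h
  have hmgf_T : mgf T P (κ : ℝ) = ((n - 1).choose κ : ℝ) := by
    have h := hindep.mgf_sum (t := (κ : ℝ)) (fun i => hmeas i) s'
    rw [hTT'] at h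
    rw [h, show (∏ j ∈ s', mgf (X (j : ℕ)) P (κ : ℝ))
        = ∏ i ∈ Finset.Ico (κ + 1) n, mgf (X i) P (κ : ℝ) from
        prod_erase_subtype hmemκ (fun i => mgf (X i) P (κ : ℝ)),
      Finset.prod_congr rfl per_mgf, prod_ratio_choose κ n hκn]
  have hlintT : ∫⁻ ω, ENNReal.ofReal (Real.exp ((κ : ℝ) * T ω)) ∂P
      = ENNReal.ofReal (((n - 1).choose κ : ℝ)) := by
    rw [← ofReal_integral_eq_lintegral_ofReal hInt_T (ae_of_all _ fun ω => (Real.exp_pos _).le)]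
    rw [show (∫ ω, Real.exp ((κ : ℝ) * T ω) ∂P) = mgf T P (κ : ℝ) from rfl, hmgf_T]
  haveI : IsProbabilityMeasure (expMeasure (κ : ℝ)) := isProbabilityMeasure_expMeasure hκpos
  set ν : Measure ℝ := P.map T with hν
  haveI : IsProbabilityMeasure ν := Measure.isProbabilityMeasure_map hT_meas.aemeasurable
  have hκlaw : P.map (X κ) = expMeasure κ := hlaw κ hmemκ
  have hpair : P.map (fun ω => (T ω, X κ ω)) = ν.prod (expMeasure κ) := by
    rw [hν, ← hκlaw]
    exact (indepFun_iff_map_prod_eq_prod_map_map hT_meas.aemeasurable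
      (hmeas κ).aemeasurable).mp hIndep
  set A : Set (ℝ × ℝ) := {p | s₀ ≤ p.1 + p.2} with hA'
  have hA : MeasurableSet A := measurableSet_le measurable_const (measurable_fst.add measurable_snd)
  have hsub : {ω | F + ∑ i ∈ Finset.Ico κ n, X i ω ≥ t} ⊆ (fun ω => (T ω, X κ ω)) ⁻¹' A := by
    intro ω hω
    simp only [mem_setOf_eq, ge_iff_le] at hω
    have hsum : ∑ i ∈ Finset.Ico κ n, X i ω = X κ ω + T ω :=
      Finset.sum_eq_sum_Ico_succ_bot hκn _
    rw [hsum] at hω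
    simp only [mem_preimage, hA', mem_setOf_eq]
    simp only [hs₀]
    linarith
  have key : P {ω | F + ∑ i ∈ Finset.Ico κ n, X i ω ≥ t}
      ≤ ENNReal.ofReal (Real.exp (-(κ : ℝ) * (t - 2)) * ((n - 1).choose κ : ℝ)) := by
    calc P {ω | F + ∑ i ∈ Finset.Ico κ n, X i ω ≥ t}
        ≤ P ((fun ω => (T ω, X κ ω)) ⁻¹' A) := measure_mono hsub
      _ = (ν.prod (expMeasure κ)) A := by
          rw [← Measure.map_apply (hT_meas.prodMk (hmeas κ)) hA, hpair]
      _ = ∫⁻ x, expMeasure (κ : ℝ) (Prod.mk x ⁻¹' A) ∂ν := Measure.prod_apply hA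
      _ = ∫⁻ x, expMeasure (κ : ℝ) (Ici (s₀ - x)) ∂ν := by
          congr 1
          funext x
          congr 1
          ext y
          simp only [mem_preimage, hA', mem_setOf_eq, mem_Ici]
          exact ⟨fun h => by linarith, fun h => by linarith⟩
      _ ≤ ∫⁻ x, ENNReal.ofReal (Real.exp (-((κ : ℝ) * (s₀ - x)))) ∂ν :=
          lintegral_mono fun x => expMeasure_tail hκpos _
      _ = ∫⁻ x, ENNReal.ofReal (Real.exp (-((κ : ℝ) * s₀)))
            * ENNReal.ofReal (Real.exp ((κ : ℝ) * x)) ∂ν := by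
          congr 1
          funext x
          rw [← ENNReal.ofReal_mul (Real.exp_nonneg _), ← Real.exp_add]
          congr 2
          ring
      _ = ENNReal.ofReal (Real.exp (-((κ : ℝ) * s₀)))
            * ∫⁻ x, ENNReal.ofReal (Real.exp ((κ : ℝ) * x)) ∂ν := lintegral_const_mul _ hmE
      _ = ENNReal.ofReal (Real.exp (-((κ : ℝ) * s₀)))
            * ENNReal.ofReal (((n - 1).choose κ : ℝ)) := by
          rw [hν, lintegral_map hmE hT_meas, hlintT]
      _ = ENNReal.ofReal (Real.exp (-(κ : ℝ) * (t - 2)) * ((n - 1).choose κ : ℝ)) := by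
          rw [← ENNReal.ofReal_mul (Real.exp_nonneg _)]
          congr 3
          simp only [hs₀]
          ring
  have h2 := ENNReal.toReal_le_of_le_ofReal (by positivity) key
  calc (P {ω | F + ∑ i ∈ Finset.Ico κ n, X i ω ≥ t}).toReal
      ≤ Real.exp (-(κ : ℝ) * (t - 2)) * ((n - 1).choose κ : ℝ) := h2
    _ = ((n - 1).choose κ : ℝ) * Real.exp (-(κ : ℝ) * (t - 2)) := mul_comm _ _
end

section
/- For every α > 0, (α² + 3α)/(α² + 4α + 2) ≤ α·e^α·∫_α^∞ (e^{−t}/t) dt ≤ (α² + 5α + 2)/(α² + 6α + 6). -/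
open MeasureTheory Set Filter

/-- derivative of the (negated) upper-bound comparison function -/
lemma pade_gderiv (x : ℝ) (hx : 0 < x) :
    HasDerivAt (fun t : ℝ => -(Real.exp (-t) * (t^2+5*t+2) / (t^3+6*t^2+6*t)))
      (Real.exp (-x) * (x^5+12*x^4+48*x^3+72*x^2+36*x+12) / (x^3+6*x^2+6*x)^2) x := by
  have hQ : x^3+6*x^2+6*x ≠ 0 := by positivity
  have he : HasDerivAt (fun t : ℝ => Real.exp (-t)) (-Real.exp (-x)) x := by
    simpa [Function.comp_def] using (Real.hasDerivAt_exp (-x)).comp x (hasDerivAt_neg x)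
  have hp : HasDerivAt (fun t : ℝ => t^2+5*t+2) (2*x+5) x := by
    have := ((hasDerivAt_pow 2 x).add ((hasDerivAt_id x).const_mul 5)).add_const 2
    simpa using this
  have hq : HasDerivAt (fun t : ℝ => t^3+6*t^2+6*t) (3*x^2+12*x+6) x := by
    have := ((hasDerivAt_pow 3 x).add (((hasDerivAt_pow 2 x)).const_mul 6)).add
      ((hasDerivAt_id x).const_mul 6)
    exact this.congr_deriv (by norm_num; ring)
  have := ((he.mul hp).div hq hQ).neg
  refine this.congr_deriv ?_
  simp only [Pi.mul_apply]
  field_simp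
  ring

/-- derivative of the (negated) lower-bound comparison function -/
lemma pade_hderiv (x : ℝ) (hx : 0 < x) :
    HasDerivAt (fun t : ℝ => -(Real.exp (-t) * (t+3) / (t^2+4*t+2)))
      (Real.exp (-x) * (x^3+8*x^2+20*x+16) / (x^2+4*x+2)^2) x := by
  have hD : x^2+4*x+2 ≠ 0 := by positivity
  have he : HasDerivAt (fun t : ℝ => Real.exp (-t)) (-Real.exp (-x)) x := by
    simpa [Function.comp_def] using (Real.hasDerivAt_exp (-x)).comp x (hasDerivAt_neg x)
  have hp : HasDerivAt (fun t : ℝ => t+3) 1 x := by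
    simpa using (hasDerivAt_id x).add_const 3
  have hq : HasDerivAt (fun t : ℝ => t^2+4*t+2) (2*x+4) x := by
    have := ((hasDerivAt_pow 2 x).add ((hasDerivAt_id x).const_mul 4)).add_const 2
    simpa using this
  have := ((he.mul hp).div hq hD).neg
  refine this.congr_deriv ?_
  simp only [Pi.mul_apply]
  field_simp
  ring

/-- Second-order Padé approximant bounds for `α·e^α·E₁(α)`: for every `α > 0`,
`(α² + 3α)/(α² + 4α + 2) ≤ α·e^α·∫_α^∞ e^{−t}/t dt ≤ (α² + 5α + 2)/(α² + 6α + 6)`. -/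
theorem pade_two_expIntegral (α : ℝ) (hα : 0 < α) :
    (α ^ 2 + 3 * α) / (α ^ 2 + 4 * α + 2) ≤
      α * Real.exp α * ∫ t in Set.Ici α, Real.exp (-t) / t ∧
    α * Real.exp α * (∫ t in Set.Ici α, Real.exp (-t) / t) ≤
      (α ^ 2 + 5 * α + 2) / (α ^ 2 + 6 * α + 6) := by
  set G : ℝ → ℝ := fun t => -(Real.exp (-t) * (t^2+5*t+2) / (t^3+6*t^2+6*t)) with hGdef
  set Gd : ℝ → ℝ := fun t =>
    Real.exp (-t) * (t^5+12*t^4+48*t^3+72*t^2+36*t+12) / (t^3+6*t^2+6*t)^2 with hGddef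
  set H : ℝ → ℝ := fun t => -(Real.exp (-t) * (t+3) / (t^2+4*t+2)) with hHdef
  set Hd : ℝ → ℝ := fun t =>
    Real.exp (-t) * (t^3+8*t^2+20*t+16) / (t^2+4*t+2)^2 with hHddef
  -- continuity within at α
  have hGcont : ContinuousWithinAt G (Set.Ici α) α :=
    (pade_gderiv α hα).continuousAt.continuousWithinAt
  have hHcont : ContinuousWithinAt H (Set.Ici α) α :=
    (pade_hderiv α hα).continuousAt.continuousWithinAt
  -- derivatives on Ioi α
  have hGderiv : ∀ x ∈ Set.Ioi α, HasDerivAt G (Gd x) x :=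
    fun x hx => pade_gderiv x (hα.trans hx)
  have hHderiv : ∀ x ∈ Set.Ioi α, HasDerivAt H (Hd x) x :=
    fun x hx => pade_hderiv x (hα.trans hx)
  -- nonnegativity of derivatives
  have hGdpos : ∀ x ∈ Set.Ioi α, 0 ≤ Gd x := by
    intro x hx
    have hx0 : 0 < x := hα.trans hx
    have : (0:ℝ) < (x^3+6*x^2+6*x)^2 := by positivity
    positivity
  have hHdpos : ∀ x ∈ Set.Ioi α, 0 ≤ Hd x := by
    intro x hx
    have hx0 : 0 < x := hα.trans hx
    positivity
  -- tendsto 0 at top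
  have hGtend : Tendsto G atTop (nhds 0) := by
    have h0 : Tendsto (fun t : ℝ => Real.exp (-t) * (t^2+5*t+2) / (t^3+6*t^2+6*t))
        atTop (nhds 0) := by
      apply squeeze_zero' (t₀ := atTop) (g := fun t => Real.exp (-t))
      · filter_upwards [eventually_ge_atTop (1:ℝ)] with t ht
        have ht0 : (0:ℝ) < t := lt_of_lt_of_le one_pos ht
        positivity
      · filter_upwards [eventually_ge_atTop (1:ℝ)] with t ht
        have ht0 : (0:ℝ) < t := lt_of_lt_of_le one_pos ht
        have hQ : (0:ℝ) < t^3+6*t^2+6*t := by positivity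
        rw [div_le_iff₀ hQ]
        have hpoly : t^2+5*t+2 ≤ t^3+6*t^2+6*t := by nlinarith [sq_nonneg (t-1)]
        exact mul_le_mul_of_nonneg_left hpoly (Real.exp_pos (-t)).le
      · exact Real.tendsto_exp_neg_atTop_nhds_zero
    simpa using h0.neg
  have hHtend : Tendsto H atTop (nhds 0) := by
    have h0 : Tendsto (fun t : ℝ => Real.exp (-t) * (t+3) / (t^2+4*t+2))
        atTop (nhds 0) := by
      apply squeeze_zero' (t₀ := atTop) (g := fun t => Real.exp (-t))
      · filter_upwards [eventually_ge_atTop (1:ℝ)] with t ht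
        have ht0 : (0:ℝ) < t := lt_of_lt_of_le one_pos ht
        positivity
      · filter_upwards [eventually_ge_atTop (1:ℝ)] with t ht
        have ht0 : (0:ℝ) < t := lt_of_lt_of_le one_pos ht
        have hD : (0:ℝ) < t^2+4*t+2 := by positivity
        rw [div_le_iff₀ hD]
        have hpoly : t+3 ≤ t^2+4*t+2 := by nlinarith [sq_nonneg (t-1)]
        exact mul_le_mul_of_nonneg_left hpoly (Real.exp_pos (-t)).le
      · exact Real.tendsto_exp_neg_atTop_nhds_zero
    simpa using h0.neg
  -- integral values via FTC
  have hGint : ∫ x in Set.Ioi α, Gd x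
      = Real.exp (-α) * (α^2+5*α+2) / (α^3+6*α^2+6*α) :=
    by
    have := integral_Ioi_of_hasDerivAt_of_nonneg hGcont hGderiv hGdpos hGtend
    rw [this]; simp [hGdef]
  have hHint : ∫ x in Set.Ioi α, Hd x
      = Real.exp (-α) * (α+3) / (α^2+4*α+2) := by
    have := integral_Ioi_of_hasDerivAt_of_nonneg hHcont hHderiv hHdpos hHtend
    rw [this]; simp [hHdef]
  have hGintegrable : IntegrableOn Gd (Set.Ioi α) :=
    integrableOn_Ioi_deriv_of_nonneg hGcont hGderiv hGdpos hGtend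
  have hHintegrable : IntegrableOn Hd (Set.Ioi α) :=
    integrableOn_Ioi_deriv_of_nonneg hHcont hHderiv hHdpos hHtend
  -- pointwise bounds of the integrand
  have hle_upper : ∀ x ∈ Set.Ioi α, Real.exp (-x) / x ≤ Gd x := by
    intro x hx
    have hx0 : 0 < x := hα.trans hx
    have hQ : (0:ℝ) < (x^3+6*x^2+6*x)^2 := by positivity
    rw [hGddef, div_le_div_iff₀ hx0 hQ]
    nlinarith [Real.exp_pos (-x), hx0.le]
  have hle_lower : ∀ x ∈ Set.Ioi α, Hd x ≤ Real.exp (-x) / x := by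
    intro x hx
    have hx0 : 0 < x := hα.trans hx
    have hD : (0:ℝ) < (x^2+4*x+2)^2 := by positivity
    rw [hHddef, div_le_div_iff₀ hD hx0]
    nlinarith [Real.exp_pos (-x), hx0.le]
  -- integrability of the integrand
  have hmeas : AEStronglyMeasurable (fun t : ℝ => Real.exp (-t) / t)
      (volume.restrict (Set.Ioi α)) := by
    apply ContinuousOn.aestronglyMeasurable _ measurableSet_Ioi
    intro x hx
    have hx0 : 0 < x := hα.trans hx
    exact (((Real.continuous_exp.comp continuous_neg).continuousAt).div
      continuousAt_id hx0.ne').continuousWithinAt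
  have hInt : IntegrableOn (fun t : ℝ => Real.exp (-t) / t) (Set.Ioi α) := by
    apply hGintegrable.mono' hmeas
    rw [ae_restrict_iff' measurableSet_Ioi]
    filter_upwards with x
    intro hx
    have hx0 : 0 < x := hα.trans hx
    rw [Real.norm_eq_abs, abs_of_nonneg (by positivity)]
    exact hle_upper x hx
  -- comparisons of integrals
  have hup : ∫ t in Set.Ioi α, Real.exp (-t) / t
      ≤ Real.exp (-α) * (α^2+5*α+2) / (α^3+6*α^2+6*α) := by
    rw [← hGint]
    exact setIntegral_mono_on hInt hGintegrable measurableSet_Ioi hle_upper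
  have hlo : Real.exp (-α) * (α+3) / (α^2+4*α+2)
      ≤ ∫ t in Set.Ioi α, Real.exp (-t) / t := by
    rw [← hHint]
    exact setIntegral_mono_on hHintegrable hInt measurableSet_Ioi hle_lower
  rw [MeasureTheory.integral_Ici_eq_integral_Ioi]
  have hexp : Real.exp α * Real.exp (-α) = 1 := by
    rw [← Real.exp_add]; simp
  have hQα : (0:ℝ) < α^3+6*α^2+6*α := by positivity
  have hDα : (0:ℝ) < α^2+4*α+2 := by positivity
  have hQ2 : (0:ℝ) < α^2+6*α+6 := by positivity
  have hEpos : (0:ℝ) < α * Real.exp α := by positivity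
  constructor
  · calc (α ^ 2 + 3 * α) / (α ^ 2 + 4 * α + 2)
        = α * Real.exp α * (Real.exp (-α) * (α+3) / (α^2+4*α+2)) := by
          rw [show α * Real.exp α * (Real.exp (-α) * (α+3) / (α^2+4*α+2))
              = (Real.exp α * Real.exp (-α)) * (α * (α+3) / (α^2+4*α+2)) by ring,
            hexp, one_mul, div_eq_div_iff hDα.ne' hDα.ne']
          ring
      _ ≤ α * Real.exp α * ∫ t in Set.Ioi α, Real.exp (-t) / t := by
          exact mul_le_mul_of_nonneg_left hlo hEpos.le
  · calc α * Real.exp α * ∫ t in Set.Ioi α, Real.exp (-t) / t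
        ≤ α * Real.exp α * (Real.exp (-α) * (α^2+5*α+2) / (α^3+6*α^2+6*α)) :=
          mul_le_mul_of_nonneg_left hup hEpos.le
      _ = (α ^ 2 + 5 * α + 2) / (α ^ 2 + 6 * α + 6) := by
          rw [show α * Real.exp α * (Real.exp (-α) * (α^2+5*α+2) / (α^3+6*α^2+6*α))
              = (Real.exp α * Real.exp (-α)) * (α * (α^2+5*α+2) / (α^3+6*α^2+6*α)) by ring,
            hexp, one_mul, div_eq_div_iff hQα.ne' hQ2.ne']
          ring
end

section
/- For every α > 0, α/(α+1) ≤ α·e^α·∫_α^∞ (e^{−t}/t) dt ≤ (α+1)/(α+2). -/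
open MeasureTheory Real Set Filter Topology

private lemma E1_integrable {a : ℝ} (ha : 0 < a) :
    IntegrableOn (fun t => Real.exp (-t) / t) (Ioi a) := by
  have hg : IntegrableOn (fun t => Real.exp (-t) * a⁻¹) (Ioi a) := by
    have := (exp_neg_integrableOn_Ioi a one_pos).mul_const a⁻¹
    simpa [IntegrableOn] using this
  refine hg.mono' ?_ ?_
  · exact ((Real.measurable_exp.comp measurable_neg).div measurable_id).aestronglyMeasurable
  · filter_upwards [ae_restrict_mem measurableSet_Ioi] with t ht
    have h0 : 0 < t := ha.trans ht
    rw [Real.norm_eq_abs, abs_of_nonneg (by positivity)]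
    rw [div_eq_mul_inv]
    exact mul_le_mul_of_nonneg_left (inv_anti₀ ha ht.le) (Real.exp_pos _).le

-- derivative of -exp(-t)/(t+1)
private lemma deriv_f1 {t : ℝ} (ht : 0 < t) :
    HasDerivAt (fun t => -(Real.exp (-t) / (t + 1)))
      (Real.exp (-t) * (t + 2) / (t + 1) ^ 2) t := by
  have h1 : HasDerivAt (fun t : ℝ => Real.exp (-t)) (-Real.exp (-t)) t := by
    simpa [Function.comp_def] using (Real.hasDerivAt_exp (-t)).comp t (hasDerivAt_neg t)
  have h2 : HasDerivAt (fun t : ℝ => t + 1) 1 t := by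
    simpa using (hasDerivAt_id t).add_const 1
  have hne : t + 1 ≠ 0 := by linarith
  have := (h1.div h2 hne).neg
  refine this.congr_deriv ?_
  ring

-- derivative of -(exp(-t)*(t+1)/(t*(t+2)))
private lemma deriv_f2 {t : ℝ} (ht : 0 < t) :
    HasDerivAt (fun t => -(Real.exp (-t) * (t + 1) / (t * (t + 2))))
      (Real.exp (-t) * (t ^ 3 + 4 * t ^ 2 + 4 * t + 2) / (t * (t + 2)) ^ 2) t := by
  have h1 : HasDerivAt (fun t : ℝ => Real.exp (-t)) (-Real.exp (-t)) t := by
    simpa [Function.comp_def] using (Real.hasDerivAt_exp (-t)).comp t (hasDerivAt_neg t)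
  have hN : HasDerivAt (fun t : ℝ => Real.exp (-t) * (t + 1))
      (-Real.exp (-t) * (t + 1) + Real.exp (-t) * 1) t :=
    h1.mul (by simpa using (hasDerivAt_id t).add_const 1)
  have hM : HasDerivAt (fun t : ℝ => t * (t + 2)) (1 * (t + 2) + t * 1) t :=
    (hasDerivAt_id t).mul (by simpa using (hasDerivAt_id t).add_const 2)
  have hne : t * (t + 2) ≠ 0 := by positivity
  have := (hN.div hM hne).neg
  refine this.congr_deriv ?_
  have h2 : t + 2 ≠ 0 := by linarith
  ring

/-- First-order Padé approximant bounds for `α·e^α·E₁(α)`: for every `α > 0`,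
`α/(α+1) ≤ α·e^α·∫_α^∞ e^{−t}/t dt ≤ (α+1)/(α+2)`. -/
theorem pade_one_expIntegral (α : ℝ) (hα : 0 < α) :
    α / (α + 1) ≤ α * Real.exp α * ∫ t in Set.Ici α, Real.exp (-t) / t ∧
    α * Real.exp α * (∫ t in Set.Ici α, Real.exp (-t) / t) ≤ (α + 1) / (α + 2) := by
  have hIci : (∫ t in Set.Ici α, Real.exp (-t) / t) = ∫ t in Ioi α, Real.exp (-t) / t :=
    integral_Ici_eq_integral_Ioi
  have hint : IntegrableOn (fun t => Real.exp (-t) / t) (Ioi α) := E1_integrable hα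
  -- lower bound integral
  have hd1 : ∀ x ∈ Ici α, HasDerivAt (fun t => -(Real.exp (-t) / (t + 1)))
      (Real.exp (-x) * (x + 2) / (x + 1) ^ 2) x := fun x hx => deriv_f1 (lt_of_lt_of_le hα hx)
  have hpos1 : ∀ x ∈ Ioi α, 0 ≤ Real.exp (-x) * (x + 2) / (x + 1) ^ 2 := by
    intro x hx
    have : 0 < x := hα.trans hx
    positivity
  have htend1 : Tendsto (fun t => -(Real.exp (-t) / (t + 1))) atTop (𝓝 0) := by
    have h1 : Tendsto (fun t : ℝ => Real.exp (-t) / (t + 1)) atTop (𝓝 0) := by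
      apply squeeze_zero' (g := fun t : ℝ => Real.exp (-t))
      · filter_upwards [eventually_ge_atTop (0:ℝ)] with t ht
        positivity
      · filter_upwards [eventually_ge_atTop (0:ℝ)] with t ht
        rw [div_le_iff₀ (by linarith)]
        nlinarith [Real.exp_pos (-t)]
      · exact Real.tendsto_exp_neg_atTop_nhds_zero
    simpa using h1.neg
  have hval1 : (∫ x in Ioi α, Real.exp (-x) * (x + 2) / (x + 1) ^ 2)
      = Real.exp (-α) / (α + 1) := by
    rw [integral_Ioi_of_hasDerivAt_of_nonneg' hd1 hpos1 htend1]
    simp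
  have hint1 : IntegrableOn (fun x => Real.exp (-x) * (x + 2) / (x + 1) ^ 2) (Ioi α) :=
    integrableOn_Ioi_deriv_of_nonneg' hd1 hpos1 htend1
  -- upper bound integral
  have hd2 : ∀ x ∈ Ici α, HasDerivAt (fun t => -(Real.exp (-t) * (t + 1) / (t * (t + 2))))
      (Real.exp (-x) * (x ^ 3 + 4 * x ^ 2 + 4 * x + 2) / (x * (x + 2)) ^ 2) x :=
    fun x hx => deriv_f2 (lt_of_lt_of_le hα hx)
  have hpos2 : ∀ x ∈ Ioi α, 0 ≤ Real.exp (-x) * (x ^ 3 + 4 * x ^ 2 + 4 * x + 2) / (x * (x + 2)) ^ 2 := by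
    intro x hx
    have : 0 < x := hα.trans hx
    positivity
  have htend2 : Tendsto (fun t => -(Real.exp (-t) * (t + 1) / (t * (t + 2)))) atTop (𝓝 0) := by
    have h1 : Tendsto (fun t : ℝ => Real.exp (-t) * (t + 1) / (t * (t + 2))) atTop (𝓝 0) := by
      apply squeeze_zero' (g := fun t : ℝ => Real.exp (-t))
      · filter_upwards [eventually_ge_atTop (1:ℝ)] with t ht
        positivity
      · filter_upwards [eventually_ge_atTop (1:ℝ)] with t ht
        rw [div_le_iff₀ (by nlinarith)]
        have h : t + 1 ≤ t * (t + 2) := by nlinarith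
        exact mul_le_mul_of_nonneg_left h (Real.exp_pos (-t)).le
      · exact Real.tendsto_exp_neg_atTop_nhds_zero
    simpa using h1.neg
  have hval2 : (∫ x in Ioi α, Real.exp (-x) * (x ^ 3 + 4 * x ^ 2 + 4 * x + 2) / (x * (x + 2)) ^ 2)
      = Real.exp (-α) * (α + 1) / (α * (α + 2)) := by
    rw [integral_Ioi_of_hasDerivAt_of_nonneg' hd2 hpos2 htend2]
    simp
  have hint2 : IntegrableOn
      (fun x => Real.exp (-x) * (x ^ 3 + 4 * x ^ 2 + 4 * x + 2) / (x * (x + 2)) ^ 2) (Ioi α) :=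
    integrableOn_Ioi_deriv_of_nonneg' hd2 hpos2 htend2
  -- comparisons
  have hcomp1 : (∫ x in Ioi α, Real.exp (-x) * (x + 2) / (x + 1) ^ 2)
      ≤ ∫ x in Ioi α, Real.exp (-x) / x := by
    apply setIntegral_mono_on hint1 hint measurableSet_Ioi
    intro x hx
    have hx0 : 0 < x := hα.trans hx
    rw [div_le_div_iff₀ (by positivity) hx0]
    nlinarith [Real.exp_pos (-x)]
  have hcomp2 : (∫ x in Ioi α, Real.exp (-x) / x)
      ≤ ∫ x in Ioi α, Real.exp (-x) * (x ^ 3 + 4 * x ^ 2 + 4 * x + 2) / (x * (x + 2)) ^ 2 := by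
    apply setIntegral_mono_on hint hint2 measurableSet_Ioi
    intro x hx
    have hx0 : 0 < x := hα.trans hx
    rw [div_le_div_iff₀ hx0 (by positivity)]
    nlinarith [Real.exp_pos (-x)]
  have hee : Real.exp α * Real.exp (-α) = 1 := by
    rw [← Real.exp_add]; simp
  constructor
  · rw [hIci]
    have := mul_le_mul_of_nonneg_left hcomp1 (le_of_lt (by positivity : (0:ℝ) < α * Real.exp α))
    calc α / (α + 1) = α * Real.exp α * (Real.exp (-α) / (α + 1)) := by
          field_simp
          linear_combination (-1) * hee
      _ ≤ α * Real.exp α * ∫ x in Ioi α, Real.exp (-x) / x := by rw [← hval1]; exact this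
  · rw [hIci]
    have := mul_le_mul_of_nonneg_left hcomp2 (le_of_lt (by positivity : (0:ℝ) < α * Real.exp α))
    calc α * Real.exp α * (∫ x in Ioi α, Real.exp (-x) / x)
        ≤ α * Real.exp α * (Real.exp (-α) * (α + 1) / (α * (α + 2))) := by rw [← hval2]; exact this
      _ = (α + 1) / (α + 2) := by
          field_simp
          linear_combination hee
end
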